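/- Let G = (V, E) be a finite simple graph. The property of being a powerful alliance is reconfiguration monotone increasing: if A and B are powerful alliances of G such that B is obtained from A by one token jumping step, and v is the unique vertex of B ∖ A, then A ∪ {v} is a powerful alliance. -/

import Mathlib

open Finset

variable {V : Type*}

section Defs

variable [Fintype V] [DecidableEq V] (G : SimpleGraph V) [DecidableRel G.Adj]

/-- `NbrsIn G A v` is the number of neighbors of `v` lying in `A` (denoted `d_A(v)`). -/
def NbrsIn (A : Finset V) (v : V) : ℕ := (A.filter (fun u => G.Adj v u)).card

/-- The boundary `∂A = N(A) ∖ A`: vertices outside `A` with a neighbor in `A`. -/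
def Bdry (A : Finset V) : Finset V :=
  Finset.univ.filter (fun v => v ∉ A ∧ ∃ u ∈ A, G.Adj v u)

/-- `A` is a defensive alliance: `d_A(v) + 1 ≥ d_{V∖A}(v)` for every `v ∈ A`. -/
def DefAll (A : Finset V) : Prop := ∀ v ∈ A, NbrsIn G A v + 1 ≥ NbrsIn G Aᶜ v

/-- `A` is an offensive alliance: `d_A(v) ≥ d_{V∖A}(v) + 1` for every `v ∈ ∂A`. -/
def OffAll (A : Finset V) : Prop := ∀ v ∈ Bdry G A, NbrsIn G A v ≥ NbrsIn G Aᶜ v + 1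

/-- `A` is a powerful alliance: both a defensive and an offensive alliance. -/
def PowAll (A : Finset V) : Prop := DefAll G A ∧ OffAll G A

/-- `A` is a dominating set: every vertex is in `A` or has a neighbor in `A`. -/
def DomSet (A : Finset V) : Prop := ∀ v : V, v ∈ A ∨ ∃ u ∈ A, G.Adj v u

/-- `A` is an independent set. -/
def IndSet (A : Finset V) : Prop := ∀ u ∈ A, ∀ w ∈ A, ¬ G.Adj u w

/-- The set of leaves (vertices of degree one) of `G`. -/
def Leaves : Finset V := Finset.univ.filter (fun v => G.degree v = 1)

/-- `Z(X) = {v ∈ V ∖ N[X] : N(v) ⊆ L ∪ ∂X}`. -/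
def ZSet (X : Finset V) : Finset V :=
  Finset.univ.filter (fun v => v ∉ X ∧ (∀ u ∈ X, ¬ G.Adj v u) ∧
    G.neighborFinset v ⊆ Leaves G ∪ Bdry G X)

/-- `Y(X) = N[X] ∪ Z(X) ∪ L`. -/
def YSet (X : Finset V) : Finset V := (X ∪ Bdry G X) ∪ ZSet G X ∪ Leaves G

/-- Global independent offensive alliance: offensive alliance that is dominating and independent. -/
def GIOA (A : Finset V) : Prop := OffAll G A ∧ DomSet G A ∧ IndSet G A

end Defs

/-- The induced subgraph `G^{≤r}` on vertices of degree at most `r` (modelled as a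
graph on all of `V` whose edges are the edges of `G` with both endpoints of degree `≤ r`). -/
def GLE [Fintype V] (G : SimpleGraph V) [DecidableRel G.Adj] (r : ℕ) : SimpleGraph V where
  Adj u w := G.Adj u w ∧ G.degree u ≤ r ∧ G.degree w ≤ r
  symm := ⟨fun u w h => ⟨h.1.symm, h.2.2, h.2.1⟩⟩
  loopless := ⟨fun u h => G.loopless.irrefl u h.1⟩

section Steps

variable [DecidableEq V]

/-- Token jumping step: `|A| = |B|` and `|A ∖ B| = 1`. -/
def TJStep (A B : Finset V) : Prop := A.card = B.card ∧ (A \ B).card = 1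

/-- Token addition step: `A ⊆ B` and `|B ∖ A| = 1`. -/
def TAStep (A B : Finset V) : Prop := A ⊆ B ∧ (B \ A).card = 1

/-- Token removal step: `B ⊆ A` and `|A ∖ B| = 1`. -/
def TRStep (A B : Finset V) : Prop := B ⊆ A ∧ (A \ B).card = 1

/-- Token addition/removal (TAR) step. -/
def TARStep (A B : Finset V) : Prop := TAStep A B ∨ TRStep A B

/-- `f 0, f 1, …, f (n-1)` is a reconfiguration sequence (with `n` members, i.e. of
length `n`) from `A` to `B` for step relation `step`, all of whose members satisfy `X`. -/
def SeqOn (step : Finset V → Finset V → Prop) (X : Finset V → Prop)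
    (f : ℕ → Finset V) (A B : Finset V) (n : ℕ) : Prop :=
  1 ≤ n ∧ f 0 = A ∧ f (n - 1) = B ∧
    (∀ i, i + 1 < n → step (f i) (f (i + 1))) ∧ (∀ i, i < n → X (f i))

/-- There is an `X`-`step` reconfiguration sequence of length `n` from `A` to `B`. -/
def IsSeq (step : Finset V → Finset V → Prop) (X : Finset V → Prop)
    (A B : Finset V) (n : ℕ) : Prop :=
  ∃ f : ℕ → Finset V, SeqOn step X f A B n

/-- `X` is reconfiguration monotone increasing (rmi). -/
def Rmi (X : Finset V → Prop) : Prop :=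
  ∀ A B : Finset V, X A → X B → TJStep A B → ∀ v ∈ B \ A, X (insert v A)

/-- `X` is reconfiguration monotone decreasing (rmd). -/
def Rmd (X : Finset V → Prop) : Prop :=
  ∀ A B : Finset V, X A → X B → TJStep A B → ∀ v ∈ A \ B, X (A.erase v)

end Steps

lemma nbrsIn_mono {V : Type*} [Fintype V] [DecidableEq V]
    (G : SimpleGraph V) [DecidableRel G.Adj] {A C : Finset V} (h : A ⊆ C) (u : V) :
    NbrsIn G A u ≤ NbrsIn G C u :=
  Finset.card_le_card (Finset.filter_subset_filter _ h)

theorem stmt_6 {V : Type*} [Fintype V] [DecidableEq V]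
    (G : SimpleGraph V) [DecidableRel G.Adj] :
    Rmi (fun A : Finset V => PowAll G A) := by
  intro A B hA hB hTJ v hv
  rw [Finset.mem_sdiff] at hv
  have hcard : (B \ A).card = 1 := by
    rw [← Finset.card_sdiff_comm hTJ.1]; exact hTJ.2
  have hBA : B \ A = {v} := by
    obtain ⟨a, ha⟩ := Finset.card_eq_one.mp hcard
    have : v ∈ ({a} : Finset V) := by rw [← ha, Finset.mem_sdiff]; exact hv
    rw [Finset.mem_singleton] at this; rw [ha, this]
  set C : Finset V := insert v A with hC
  have hAC : A ⊆ C := Finset.subset_insert _ _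
  have hBC : B ⊆ C := by
    intro w hw
    by_cases hwA : w ∈ A
    · exact hAC hwA
    · have : w ∈ B \ A := Finset.mem_sdiff.mpr ⟨hw, hwA⟩
      rw [hBA, Finset.mem_singleton] at this
      rw [this]; exact Finset.mem_insert_self _ _
  have hCcA : Cᶜ ⊆ Aᶜ := Finset.compl_subset_compl.mpr hAC
  have hCcB : Cᶜ ⊆ Bᶜ := Finset.compl_subset_compl.mpr hBC
  constructor
  · -- defensive
    intro u hu
    rcases Finset.mem_insert.mp hu with h | h
    · subst h
      calc NbrsIn G Cᶜ u ≤ NbrsIn G Bᶜ u := nbrsIn_mono G hCcB u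
        _ ≤ NbrsIn G B u + 1 := hB.1 u hv.1
        _ ≤ NbrsIn G C u + 1 := by
            exact Nat.add_le_add_right (nbrsIn_mono G hBC u) 1
    · calc NbrsIn G Cᶜ u ≤ NbrsIn G Aᶜ u := nbrsIn_mono G hCcA u
        _ ≤ NbrsIn G A u + 1 := hA.1 u h
        _ ≤ NbrsIn G C u + 1 := Nat.add_le_add_right (nbrsIn_mono G hAC u) 1
  · -- offensive
    intro u hu
    rw [Bdry, Finset.mem_filter] at hu
    obtain ⟨-, huC, x, hxC, hadj⟩ := hu
    rcases Finset.mem_insert.mp hxC with h | h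
    · subst h
      have huB : u ∈ Bdry G B := by
        rw [Bdry, Finset.mem_filter]
        exact ⟨Finset.mem_univ _, fun hc => huC (hBC hc), x, hv.1, hadj⟩
      calc NbrsIn G Cᶜ u + 1 ≤ NbrsIn G Bᶜ u + 1 :=
            Nat.add_le_add_right (nbrsIn_mono G hCcB u) 1
        _ ≤ NbrsIn G B u := hB.2 u huB
        _ ≤ NbrsIn G C u := nbrsIn_mono G hBC u
    · have huA : u ∈ Bdry G A := by
        rw [Bdry, Finset.mem_filter]
        exact ⟨Finset.mem_univ _, fun hc => huC (hAC hc), x, h, hadj⟩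
      calc NbrsIn G Cᶜ u + 1 ≤ NbrsIn G Aᶜ u + 1 :=
            Nat.add_le_add_right (nbrsIn_mono G hCcA u) 1
        _ ≤ NbrsIn G A u := hA.2 u huA
        _ ≤ NbrsIn G C u := nbrsIn_mono G hAC u
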